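/- Let 𝒞 = (C_1, …, C_k) be an edge clique cover of a finite simple graph G = (V,E). If 𝒞 is locally minimal, then for each pair of distinct indices a, b ∈ {1, …, k} there exist vertices x ∈ C_a and y ∈ C_b with x ≠ y and {x,y} ∉ E. -/

import Mathlib

/-- An edge clique cover of a simple graph `G`: a finite indexed family of cliques
such that every edge of `G` has both endpoints in some member of the family. -/
def IsEdgeCliqueCover {V : Type*} (G : SimpleGraph V) {k : ℕ} (C : Fin k → Finset V) : Prop :=
  (∀ l, G.IsClique (C l : Set V)) ∧ ∀ ⦃x y : V⦄, G.Adj x y → ∃ l, x ∈ C l ∧ y ∈ C l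

/-- One step of the locally minimal construction: processing the edge `{x, y}`.
If the edge is already contained in some clique of the current family, nothing changes;
otherwise, if some clique of the family can absorb the edge (the union is still a clique),
exactly one such clique is replaced by its extension; otherwise the new clique `{x, y}`
is appended. -/
inductive LMStep {V : Type*} [DecidableEq V] (G : SimpleGraph V) :
    List (Finset V) → V → V → List (Finset V) → Prop
  | covered (cc : List (Finset V)) (x y : V)
      (h : ∃ D ∈ cc, x ∈ D ∧ y ∈ D) :
      LMStep G cc x y cc
  | extend (pre post : List (Finset V)) (D : Finset V) (x y : V)
      (hnc : ∀ D' ∈ pre ++ D :: post, ¬ (x ∈ D' ∧ y ∈ D'))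
      (hcl : G.IsClique ((D ∪ {x, y} : Finset V) : Set V)) :
      LMStep G (pre ++ D :: post) x y (pre ++ (D ∪ {x, y}) :: post)
  | newClique (cc : List (Finset V)) (x y : V)
      (hnc : ∀ D ∈ cc, ¬ (x ∈ D ∧ y ∈ D))
      (hext : ∀ D ∈ cc, ¬ G.IsClique ((D ∪ {x, y} : Finset V) : Set V)) :
      LMStep G cc x y (cc ++ [({x, y} : Finset V)])

/-- `LMRun G cc es cc'` means: starting from the family `cc` and processing the edges in
the list `es` one by one according to the locally minimal construction, one can obtain
the family `cc'`. -/
inductive LMRun {V : Type*} [DecidableEq V] (G : SimpleGraph V) :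
    List (Finset V) → List (Sym2 V) → List (Finset V) → Prop
  | nil (cc : List (Finset V)) : LMRun G cc [] cc
  | cons (cc cc' cc'' : List (Finset V)) (x y : V) (es : List (Sym2 V))
      (hstep : LMStep G cc x y cc') (hrest : LMRun G cc' es cc'') :
      LMRun G cc (s(x, y) :: es) cc''

/-- A family of cliques `(C_1, …, C_k)` is a locally minimal clique cover of `G` if it can
be produced (as an unordered family) by the locally minimal construction, starting from the
empty family and processing the edges of `G` in some enumeration (a duplicate-free list
containing exactly the edges of `G`). -/
def IsLocallyMinimal {V : Type*} [DecidableEq V] (G : SimpleGraph V) {k : ℕ}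
    (C : Fin k → Finset V) : Prop :=
  ∃ es : List (Sym2 V), es.Nodup ∧ (∀ e, e ∈ es ↔ e ∈ G.edgeSet) ∧
    ∃ L : List (Finset V), LMRun G [] es L ∧ L.Perm (List.ofFn C)


section Aux
variable {V : Type*} [DecidableEq V] (G : SimpleGraph V)

def LMInv (cc : List (Finset V)) : Prop :=
  (∀ D ∈ cc, G.IsClique (D : Set V)) ∧
  cc.Pairwise (fun A B => ¬ G.IsClique ((A ∪ B : Finset V) : Set V))

lemma lm_mono {A A' B B' : Finset V} (hA : A ⊆ A') (hB : B ⊆ B')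
    (h : ¬ G.IsClique ((A ∪ B : Finset V) : Set V)) :
    ¬ G.IsClique ((A' ∪ B' : Finset V) : Set V) := fun hc =>
  h (hc.subset (by
    intro v hv
    simp only [Finset.coe_union, Set.mem_union] at *
    exact hv.imp (fun h => hA h) (fun h => hB h)))

lemma lm_extract {A B : Finset V} (hA : G.IsClique (A : Set V)) (hB : G.IsClique (B : Set V))
    (h : ¬ G.IsClique ((A ∪ B : Finset V) : Set V)) :
    ∃ x ∈ A, ∃ y ∈ B, x ≠ y ∧ ¬ G.Adj x y := by
  rw [SimpleGraph.isClique_iff, Set.Pairwise] at h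
  push_neg at h
  obtain ⟨u, hu, v, hv, hne, hnadj⟩ := h
  simp only [Finset.coe_union, Set.mem_union, Finset.mem_coe] at hu hv
  rcases hu with hu | hu <;> rcases hv with hv | hv
  · exact absurd (hA hu hv hne) hnadj
  · exact ⟨u, hu, v, hv, hne, hnadj⟩
  · exact ⟨v, hv, u, hu, hne.symm, fun h => hnadj h.symm⟩
  · exact absurd (hB hu hv hne) hnadj

lemma lm_step_inv {cc cc' : List (Finset V)} {x y : V} (hadj : G.Adj x y)
    (hstep : LMStep G cc x y cc') (hinv : LMInv G cc) : LMInv G cc' := by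
  obtain ⟨hcl, hpw⟩ := hinv
  cases hstep with
  | covered cc x y h => exact ⟨hcl, hpw⟩
  | extend pre post D x y hnc hclq =>
    constructor
    · intro D' hD'
      simp only [List.mem_append, List.mem_cons] at hD'
      rcases hD' with h | h | h
      · exact hcl _ (by simp [h])
      · exact h ▸ hclq
      · exact hcl _ (by simp [h])
    · rw [List.pairwise_append, List.pairwise_cons] at *
      obtain ⟨hpre, ⟨hD, hpost⟩, hcross⟩ := hpw
      refine ⟨hpre, ⟨?_, hpost⟩, ?_⟩
      · intro B hB
        exact lm_mono G Finset.subset_union_left (subset_refl B) (hD B hB)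
      · intro A hA B hB
        rcases List.mem_cons.1 hB with rfl | hB
        · exact lm_mono G (subset_refl A) Finset.subset_union_left
            (hcross A hA _ List.mem_cons_self)
        · exact hcross A hA B (List.mem_cons_of_mem _ hB)
  | newClique cc x y hnc hext =>
    constructor
    · intro D hD
      rcases List.mem_append.1 hD with h | h
      · exact hcl _ h
      · simp only [List.mem_singleton] at h
        subst h
        intro u hu v hv hne
        simp only [Finset.coe_insert, Set.mem_insert_iff, Finset.coe_singleton,
          Set.mem_singleton_iff] at hu hv
        rcases hu with rfl | rfl <;> rcases hv with rfl | rfl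
        · exact absurd rfl hne
        · exact hadj
        · exact hadj.symm
        · exact absurd rfl hne
    · rw [List.pairwise_append]
      refine ⟨hpw, List.pairwise_singleton _ _, ?_⟩
      intro A hA B hB
      simp only [List.mem_singleton] at hB
      subst hB
      exact hext A hA

lemma lm_run_inv {cc cc' : List (Finset V)} {es : List (Sym2 V)}
    (hrun : LMRun G cc es cc') (hes : ∀ e ∈ es, e ∈ G.edgeSet)
    (hinv : LMInv G cc) : LMInv G cc' := by
  induction hrun with
  | nil cc => exact hinv
  | cons cc cc' cc'' x y es hstep hrest ih =>
    have hadj : G.Adj x y := hes _ List.mem_cons_self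
    exact ih (fun e he => hes e (List.mem_cons_of_mem _ he)) (lm_step_inv G hadj hstep hinv)

end Aux

/-- If an edge clique cover `(C_1, …, C_k)` of a finite simple graph `G` is locally
minimal, then for each pair of distinct indices `a, b` there exist `x ∈ C_a` and
`y ∈ C_b` with `x ≠ y` and `{x, y} ∉ E`. -/
theorem locallyMinimal_pairwise_nonadjacent {V : Type*} [Fintype V] [DecidableEq V]
    (G : SimpleGraph V) {k : ℕ} (C : Fin k → Finset V)
    (hcov : IsEdgeCliqueCover G C) (hlm : IsLocallyMinimal G C) :
    ∀ a b : Fin k, a ≠ b → ∃ x ∈ C a, ∃ y ∈ C b, x ≠ y ∧ ¬ G.Adj x y := by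
  obtain ⟨es, _, hiff, L, hrun, hperm⟩ := hlm
  have hinv : LMInv G L := lm_run_inv G hrun (fun e he => (hiff e).1 he)
    ⟨by simp, List.Pairwise.nil⟩
  have hsymm : Symmetric (fun A B : Finset V => ¬ G.IsClique ((A ∪ B : Finset V) : Set V)) := by
    intro A B h
    rwa [Finset.union_comm]
  have hpw : (List.ofFn C).Pairwise
      (fun A B => ¬ G.IsClique ((A ∪ B : Finset V) : Set V)) :=
    (hperm.pairwise_iff @hsymm).1 hinv.2
  rw [List.pairwise_iff_get] at hpw
  have key : ∀ a b : Fin k, a ≠ b → ¬ G.IsClique ((C a ∪ C b : Finset V) : Set V) := by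
    intro a b hab
    have hlen : (List.ofFn C).length = k := List.length_ofFn
    rcases lt_or_gt_of_ne hab with h | h
    · have := hpw ⟨a, by omega⟩ ⟨b, by omega⟩ h
      simpa [List.get_ofFn] using this
    · have := hpw ⟨b, by omega⟩ ⟨a, by omega⟩ h
      have := hsymm (by simpa [List.get_ofFn] using this)
      exact this
  exact fun a b hab => lm_extract G (hcov.1 a) (hcov.1 b) (key a b hab)
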